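/- arXiv:2009.11544 — 2 statements merged into one kernel-verified Lean document; each statement's English description precedes it below -/
import Mathlib

section
/- Let H be a complex Hilbert space, n ≥ 2, ν : Fin (n−1) → ℂ with Re ν_i < 0 for all i, and Ω > 0 a real number. Let g : ((Fin (n−1) → ℕ) × ℤ) → H, indexed by pairs (k, m) of a multi-index k and an integer m, be a pairwise orthogonal family with ∑_{(k,m)} ‖g_{k,m}‖² < ∞. Set Λ(k, m) := (∑_i k_i ν_i) + i m Ω. Then: (i) for every t ≥ 0 the series u(t) := ∑_{(k,m)} e^{Λ(k,m) t} g_{k,m} converges in H; (ii) for every s ∈ ℂ with Re s > 0 the function t ↦ e^{-s t} u(t) is Bochner integrable on [0,∞), the series ∑_{(k,m)} (s − Λ(k,m))^{-1} g_{k,m} converges in H, and ∫_0^∞ e^{-s t} u(t) dt = ∑_{(k,m)} (s − Λ(k,m))^{-1} g_{k,m}. (This is the spectral expansion of the Koopman resolvent for dynamics converging to a stable limit cycle with angular frequency Ω and characteristic exponents ν_1,…,ν_{n−1}, where g_{k,m} = P_{k,m} f are the orthogonal spectral projections of the observable in the averaging kernel Hilbert space.) -/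
open MeasureTheory
open scoped InnerProductSpace

lemma cexp_integrableOn {c : ℂ} (hc : c.re < 0) :
    IntegrableOn (fun t : ℝ => Complex.exp (c * t)) (Set.Ioi 0) := by
  have h := exp_neg_integrableOn_Ioi 0 (b := -c.re) (by linarith)
  refine h.mono' ?_ ?_
  · exact (Continuous.cexp (by continuity)).aestronglyMeasurable
  · filter_upwards with t
    simp [Complex.norm_exp, Complex.mul_re, neg_mul, mul_comm]

lemma hasDerivAt_cexp_aux {c : ℂ} (hc : c ≠ 0) (t : ℝ) :
    HasDerivAt (fun t : ℝ => c⁻¹ * Complex.exp (c * t)) (Complex.exp (c * t)) t := by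
  have h1 : HasDerivAt (fun w : ℂ => c⁻¹ * Complex.exp (c * w))
      (Complex.exp (c * (t:ℂ))) (t:ℂ) := by
    have h := ((Complex.hasDerivAt_exp (c * t)).comp (t:ℂ)
      ((hasDerivAt_id (t:ℂ)).const_mul c)).const_mul c⁻¹
    convert h using 1
    · rfl
    · rfl
    · rfl
    · rw [mul_one, mul_left_comm, inv_mul_cancel₀ hc, mul_one]
  simpa using h1.comp_ofReal

lemma integral_cexp_Ioi {c : ℂ} (hc : c.re < 0) :
    ∫ t in Set.Ioi (0 : ℝ), Complex.exp (c * t) = -c⁻¹ := by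
  have hder : ∀ t ∈ Set.Ici (0:ℝ), HasDerivAt (fun t : ℝ => c⁻¹ * Complex.exp (c * t))
      (Complex.exp (c * t)) t :=
    fun t _ => hasDerivAt_cexp_aux (fun h => by simp [h] at hc : c ≠ 0) t
  have htend : Filter.Tendsto (fun t : ℝ => c⁻¹ * Complex.exp (c * t))
      Filter.atTop (nhds 0) := by
    rw [tendsto_zero_iff_norm_tendsto_zero]
    have h1 : Filter.Tendsto (fun t : ℝ => Real.exp (-((-c.re) * t))) Filter.atTop (nhds 0) :=
      Real.tendsto_exp_neg_atTop_nhds_zero.comp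
        (Filter.Tendsto.const_mul_atTop (by linarith) Filter.tendsto_id)
    have := h1.const_mul ‖(c⁻¹ : ℂ)‖
    simpa [Complex.norm_exp, Complex.mul_re, neg_mul] using this
  have := integral_Ioi_of_hasDerivAt_of_tendsto' hder (cexp_integrableOn hc) htend
  simpa using this

section Orth

variable {ι : Type*} {H : Type*} [NormedAddCommGroup H] [InnerProductSpace ℂ H]

lemma orthFam (g : ι → H) (horth : Pairwise fun p q => ⟪g p, g q⟫_ℂ = 0) :
    OrthogonalFamily ℂ (fun p => (ℂ ∙ g p : Submodule ℂ H))
      (fun p => (ℂ ∙ g p).subtypeₗᵢ) := by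
  intro p q hpq v w
  obtain ⟨a, ha⟩ := Submodule.mem_span_singleton.1 v.2
  obtain ⟨b, hb⟩ := Submodule.mem_span_singleton.1 w.2
  show ⟪(v : H), (w : H)⟫_ℂ = 0
  rw [← ha, ← hb, inner_smul_left, inner_smul_right, horth hpq]
  ring

/-- element of the span -/
def spanElt (g : ι → H) (c : ι → ℂ) (p : ι) : (ℂ ∙ g p : Submodule ℂ H) :=
  ⟨c p • g p, Submodule.mem_span_singleton.2 ⟨c p, rfl⟩⟩

lemma spanElt_norm (g : ι → H) (c : ι → ℂ) (p : ι) :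
    ‖spanElt g c p‖ = ‖c p • g p‖ := rfl

lemma summable_orth [CompleteSpace H] (g : ι → H)
    (horth : Pairwise fun p q => ⟪g p, g q⟫_ℂ = 0) (c : ι → ℂ)
    (h : Summable fun p => ‖c p • g p‖ ^ 2) : Summable fun p => c p • g p := by
  have hV := orthFam g horth
  exact (hV.summable_iff_norm_sq_summable (spanElt g c)).2 (by simpa [spanElt_norm, spanElt] using h)

lemma norm_sum_sq_orth (g : ι → H)
    (horth : Pairwise fun p q => ⟪g p, g q⟫_ℂ = 0) (c : ι → ℂ) (s : Finset ι) :
    ‖∑ p ∈ s, c p • g p‖ ^ 2 = ∑ p ∈ s, ‖c p • g p‖ ^ 2 := by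
  have hV := orthFam g horth
  simpa [spanElt_norm, spanElt] using hV.norm_sum (spanElt g c) s

end Orth

theorem koopman_aux
    {H : Type*} [NormedAddCommGroup H] [InnerProductSpace ℂ H] [CompleteSpace H]
    {ι : Type*} [Countable ι] [Infinite ι]
    (Λ : ι → ℂ) (hΛre : ∀ p, (Λ p).re ≤ 0)
    (g : ι → H)
    (horth : Pairwise fun p q => ⟪g p, g q⟫_ℂ = 0)
    (hsum : Summable fun p => ‖g p‖ ^ 2) :
    (∀ t : ℝ, 0 ≤ t → Summable fun p : ι => Complex.exp (Λ p * t) • g p) ∧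
    ∀ s : ℂ, 0 < s.re →
      IntegrableOn
        (fun t : ℝ => Complex.exp (-s * t) • ∑' p : ι, Complex.exp (Λ p * t) • g p)
        (Set.Ioi 0) ∧
      (Summable fun p : ι => (s - Λ p)⁻¹ • g p) ∧
      ∫ t in Set.Ioi (0 : ℝ),
          Complex.exp (-s * t) • ∑' p : ι, Complex.exp (Λ p * t) • g p
        = ∑' p : ι, (s - Λ p)⁻¹ • g p := by
  classical
  have hexp_norm : ∀ (p : ι) (t : ℝ), 0 ≤ t → ‖Complex.exp (Λ p * t)‖ ≤ 1 := by
    intro p t ht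
    rw [Complex.norm_exp]
    have h1 : (Λ p * t).re = (Λ p).re * t := by simp [Complex.mul_re]
    rw [h1]
    exact Real.exp_le_one_iff.2 (mul_nonpos_of_nonpos_of_nonneg (hΛre p) ht)
  have part1 : ∀ t : ℝ, 0 ≤ t → Summable fun p : ι => Complex.exp (Λ p * t) • g p := by
    intro t ht
    apply summable_orth g horth
    apply Summable.of_nonneg_of_le (fun p => sq_nonneg _) _ hsum
    intro p
    rw [norm_smul]
    calc (‖Complex.exp (Λ p * t)‖ * ‖g p‖) ^ 2
        ≤ (1 * ‖g p‖) ^ 2 := by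
          apply pow_le_pow_left₀ (by positivity)
          exact mul_le_mul_of_nonneg_right (hexp_norm p t ht) (norm_nonneg _)
      _ = ‖g p‖ ^ 2 := by ring
  refine ⟨part1, ?_⟩
  intro s hs
  set u : ℝ → H := fun t => ∑' p : ι, Complex.exp (Λ p * t) • g p with hu
  have hsub : ∀ p : ι, (Λ p - s).re < 0 := by
    intro p
    have := hΛre p
    simp only [Complex.sub_re]
    linarith
  have hinv : ∀ p : ι, ‖(s - Λ p)⁻¹‖ ≤ (s.re)⁻¹ := by
    intro p
    rw [norm_inv]
    apply inv_anti₀ hs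
    calc s.re ≤ (s - Λ p).re := by simp only [Complex.sub_re]; linarith [hΛre p]
      _ ≤ ‖s - Λ p‖ := Complex.re_le_norm _
  have hsumR : Summable fun p : ι => (s - Λ p)⁻¹ • g p := by
    apply summable_orth g horth
    apply Summable.of_nonneg_of_le (fun p => sq_nonneg _) _ (hsum.mul_left ((s.re)⁻¹ ^ 2))
    intro p
    rw [norm_smul, mul_pow]
    apply mul_le_mul_of_nonneg_right _ (sq_nonneg _)
    exact pow_le_pow_left₀ (norm_nonneg _) (hinv p) 2
  obtain ⟨e⟩ : Nonempty (ℕ ≃ ι) := inferInstance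
  set S : ℕ → Finset ι := fun N => (Finset.range N).image e with hSdef
  have hS : Filter.Tendsto S Filter.atTop Filter.atTop := by
    apply Filter.tendsto_atTop_finset_of_monotone
    · intro a b hab
      exact Finset.image_subset_image (Finset.range_subset_range.2 hab)
    · intro x
      exact ⟨e.symm x + 1, Finset.mem_image.2 ⟨e.symm x, Finset.mem_range.2 (Nat.lt_succ_self _),
        e.apply_symm_apply x⟩⟩
  set C : ℝ := Real.sqrt (∑' p : ι, ‖g p‖ ^ 2) with hC
  set F : ℕ → ℝ → H := fun N t => ∑ p ∈ S N, Complex.exp ((Λ p - s) * t) • g p with hF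
  set bound : ℝ → ℝ := fun t => C * Real.exp (-s.re * t) with hbound
  have hbound_int : IntegrableOn bound (Set.Ioi 0) :=
    (exp_neg_integrableOn_Ioi 0 hs).const_mul C
  have hFmeas : ∀ N, AEStronglyMeasurable (F N) (volume.restrict (Set.Ioi 0)) := by
    intro N
    apply Continuous.aestronglyMeasurable
    apply continuous_finset_sum
    intro p _
    exact (Continuous.cexp (by continuity)).smul continuous_const
  have hFbound : ∀ N, ∀ᵐ t ∂(volume.restrict (Set.Ioi 0)), ‖F N t‖ ≤ bound t := by
    intro N
    rw [ae_restrict_iff' measurableSet_Ioi]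
    filter_upwards with t ht
    have ht' : (0:ℝ) ≤ t := le_of_lt ht
    have hsq : ‖F N t‖ ^ 2 ≤ bound t ^ 2 := by
      rw [hF, norm_sum_sq_orth g horth _ (S N)]
      have hterm : ∀ p ∈ S N, ‖Complex.exp ((Λ p - s) * t) • g p‖ ^ 2
          ≤ Real.exp (-s.re * t) ^ 2 * ‖g p‖ ^ 2 := by
        intro p _
        rw [norm_smul, mul_pow]
        apply mul_le_mul_of_nonneg_right _ (sq_nonneg _)
        apply pow_le_pow_left₀ (norm_nonneg _)
        rw [Complex.norm_exp]
        apply Real.exp_le_exp.2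
        have h2 : ((Λ p - s) * t).re = ((Λ p).re - s.re) * t := by
          simp [Complex.mul_re, Complex.sub_re]
        rw [h2]
        nlinarith [hΛre p]
      calc ∑ p ∈ S N, ‖Complex.exp ((Λ p - s) * t) • g p‖ ^ 2
          ≤ ∑ p ∈ S N, Real.exp (-s.re * t) ^ 2 * ‖g p‖ ^ 2 := Finset.sum_le_sum hterm
        _ = Real.exp (-s.re * t) ^ 2 * ∑ p ∈ S N, ‖g p‖ ^ 2 := by rw [Finset.mul_sum]
        _ ≤ Real.exp (-s.re * t) ^ 2 * ∑' p : ι, ‖g p‖ ^ 2 := by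
            apply mul_le_mul_of_nonneg_left _ (sq_nonneg _)
            exact Summable.sum_le_tsum (S N) (fun p _ => sq_nonneg _) hsum
        _ = bound t ^ 2 := by
            rw [hbound, hC, mul_pow, Real.sq_sqrt (tsum_nonneg fun p => sq_nonneg _)]
            ring
    have hbnn : 0 ≤ bound t := by rw [hbound]; positivity
    nlinarith [norm_nonneg (F N t)]
  have hlim : ∀ᵐ t ∂(volume.restrict (Set.Ioi 0)),
      Filter.Tendsto (fun N => F N t) Filter.atTop (nhds (Complex.exp (-s * t) • u t)) := by
    rw [ae_restrict_iff' measurableSet_Ioi]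
    filter_upwards with t ht
    have ht' : (0:ℝ) ≤ t := le_of_lt ht
    have hhs : HasSum (fun p : ι => Complex.exp (Λ p * t) • g p) (u t) :=
      (part1 t ht').hasSum
    have h1 : Filter.Tendsto (fun N => ∑ p ∈ S N, Complex.exp (Λ p * t) • g p)
        Filter.atTop (nhds (u t)) := by
      have hhs' : Filter.Tendsto (fun sfin : Finset ι => ∑ p ∈ sfin,
          Complex.exp (Λ p * t) • g p) Filter.atTop (nhds (u t)) := hhs
      exact hhs'.comp hS
    have h2 := h1.const_smul (Complex.exp (-s * t))
    apply Filter.Tendsto.congr _ h2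
    intro N
    rw [hF, Finset.smul_sum]
    apply Finset.sum_congr rfl
    intro p _
    rw [smul_smul, ← Complex.exp_add]
    ring_nf
  have hgmeas : AEStronglyMeasurable (fun t : ℝ => Complex.exp (-s * t) • u t)
      (volume.restrict (Set.Ioi 0)) :=
    aestronglyMeasurable_of_tendsto_ae Filter.atTop hFmeas hlim
  have hb_all : ∀ᵐ t ∂(volume.restrict (Set.Ioi 0)), ∀ N, ‖F N t‖ ≤ bound t :=
    MeasureTheory.ae_all_iff.2 hFbound
  have hInt : IntegrableOn (fun t : ℝ => Complex.exp (-s * t) • u t) (Set.Ioi 0) := by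
    refine Integrable.mono' hbound_int hgmeas ?_
    filter_upwards [hb_all, hlim] with t hb hl
    exact le_of_tendsto hl.norm (Filter.Eventually.of_forall hb)
  refine ⟨hInt, hsumR, ?_⟩
  have hFint : ∀ N, ∫ t in Set.Ioi (0:ℝ), F N t = ∑ p ∈ S N, (s - Λ p)⁻¹ • g p := by
    intro N
    rw [hF, integral_finset_sum]
    · apply Finset.sum_congr rfl
      intro p _
      rw [integral_smul_const, integral_cexp_Ioi (hsub p)]
      congr 1
      rw [← inv_neg, neg_sub]
    · intro p _
      exact (cexp_integrableOn (hsub p)).smul_const (g p)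
  have hTendB : Filter.Tendsto (fun N => ∑ p ∈ S N, (s - Λ p)⁻¹ • g p)
      Filter.atTop (nhds (∑' p : ι, (s - Λ p)⁻¹ • g p)) := by
    have h' : Filter.Tendsto (fun sfin : Finset ι => ∑ p ∈ sfin, (s - Λ p)⁻¹ • g p)
        Filter.atTop (nhds (∑' p : ι, (s - Λ p)⁻¹ • g p)) := hsumR.hasSum
    exact h'.comp hS
  have hTendInt := tendsto_integral_of_dominated_convergence bound hFmeas hbound_int hFbound hlim
  rw [← funext hFint] at hTendB
  exact tendsto_nhds_unique hTendInt hTendB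

set_option maxHeartbeats 1000000 in
/-- Spectral expansion of the Koopman resolvent for dynamics converging to a
stable limit cycle with angular frequency `Ω` and characteristic exponents
`ν 0, …, ν (n-2)` (all with negative real parts); `g (k, m) = P (k, m) f` are
the orthogonal spectral projections of the observable in the averaging kernel
Hilbert space, indexed by a multi-index `k : Fin (n-1) → ℕ` and `m : ℤ`. -/
theorem koopman_resolvent_stable_limit_cycle
    {H : Type*} [NormedAddCommGroup H] [InnerProductSpace ℂ H] [CompleteSpace H]
    (n : ℕ) (hn : 2 ≤ n) (ν : Fin (n - 1) → ℂ) (hν : ∀ i, (ν i).re < 0)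
    (Ω : ℝ) (hΩ : 0 < Ω)
    (g : (Fin (n - 1) → ℕ) × ℤ → H)
    (horth : Pairwise fun p q => ⟪g p, g q⟫_ℂ = 0)
    (hsum : Summable fun p => ‖g p‖ ^ 2) :
    (∀ t : ℝ, 0 ≤ t →
      Summable fun p : (Fin (n - 1) → ℕ) × ℤ =>
        Complex.exp (((∑ i, (p.1 i : ℂ) * ν i) + Complex.I * p.2 * Ω) * t) • g p) ∧
    ∀ s : ℂ, 0 < s.re →
      IntegrableOn
        (fun t : ℝ =>
          Complex.exp (-s * t) •
            ∑' p : (Fin (n - 1) → ℕ) × ℤ,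
              Complex.exp (((∑ i, (p.1 i : ℂ) * ν i) + Complex.I * p.2 * Ω) * t) • g p)
        (Set.Ioi 0) ∧
      (Summable fun p : (Fin (n - 1) → ℕ) × ℤ =>
        (s - ((∑ i, (p.1 i : ℂ) * ν i) + Complex.I * p.2 * Ω))⁻¹ • g p) ∧
      ∫ t in Set.Ioi (0 : ℝ),
          Complex.exp (-s * t) •
            ∑' p : (Fin (n - 1) → ℕ) × ℤ,
              Complex.exp (((∑ i, (p.1 i : ℂ) * ν i) + Complex.I * p.2 * Ω) * t) • g p
        = ∑' p : (Fin (n - 1) → ℕ) × ℤ,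
            (s - ((∑ i, (p.1 i : ℂ) * ν i) + Complex.I * p.2 * Ω))⁻¹ • g p := by
  have hΛre : ∀ p : (Fin (n - 1) → ℕ) × ℤ,
      ((∑ i, (p.1 i : ℂ) * ν i) + Complex.I * p.2 * Ω).re ≤ 0 := by
    intro p
    have h1 : ((∑ i, (p.1 i : ℂ) * ν i) + Complex.I * p.2 * Ω).re
        = ∑ i, (p.1 i : ℝ) * (ν i).re := by
      simp [Complex.add_re, Complex.re_sum, Complex.mul_re]
    rw [h1]
    apply Finset.sum_nonpos
    intro i _
    exact mul_nonpos_of_nonneg_of_nonpos (Nat.cast_nonneg _) (hν i).le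
  have h := koopman_aux (fun p => (∑ i, (p.1 i : ℂ) * ν i) + Complex.I * p.2 * Ω) hΛre g horth hsum
  exact h
end

section
/- Let A be an n × n complex matrix with vectors v_1, …, v_n, w_1, …, w_n ∈ ℂ^n and scalars λ_1, …, λ_n ∈ ℂ such that A v_j = λ_j v_j, w_jᵀ A = λ_j w_jᵀ, w_jᵀ v_k = δ_{jk}, and (v_1, …, v_n) is a basis of ℂ^n. Let c, x_0 ∈ ℂ^n and let s ∈ ℂ satisfy Re s > max_j Re λ_j. Then the function t ↦ e^{-s t} cᵀ (exp(t A) x_0) is integrable on [0,∞) and ∫_0^∞ e^{-s t} cᵀ (exp(t A) x_0) dt = ∑_{j=1}^n (w_jᵀ x_0)(cᵀ v_j) / (s − λ_j). (The unilateral Laplace transform of the output of a diagonalizable linear system has the partial-fraction form whose poles are the principal Koopman eigenvalues λ_j and whose residues are φ_j(x_0) V_j = (w_jᵀ x_0)(cᵀ v_j).) -/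
open Matrix MeasureTheory

lemma cexp_integrableOn_Ioi {z : ℂ} (hz : z.re < 0) :
    IntegrableOn (fun t : ℝ => Complex.exp (z * t)) (Set.Ioi 0) := by
  have hb : (0:ℝ) < -z.re := by linarith
  refine Integrable.mono' (exp_neg_integrableOn_Ioi 0 hb)
    ((Complex.continuous_exp.comp
      (continuous_const.mul Complex.continuous_ofReal)).aestronglyMeasurable) ?_
  filter_upwards with t
  simp [Complex.norm_exp, Complex.mul_re]

lemma cexp_tendsto_zero {z : ℂ} (hz : z.re < 0) :
    Filter.Tendsto (fun t : ℝ => Complex.exp (z * t) / z) Filter.atTop (nhds 0) := by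
  rw [tendsto_zero_iff_norm_tendsto_zero]
  have h1 : Filter.Tendsto (fun t : ℝ => z.re * t) Filter.atTop Filter.atBot :=
    Filter.Tendsto.const_mul_atTop_of_neg hz Filter.tendsto_id
  have h2 : Filter.Tendsto (fun t : ℝ => Real.exp (z.re * t) / ‖z‖) Filter.atTop (nhds 0) := by
    simpa using (Real.tendsto_exp_atBot.comp h1).div_const ‖z‖
  refine h2.congr fun t => ?_
  simp [Complex.norm_exp, Complex.mul_re]

lemma cexp_integral_Ioi {z : ℂ} (hz : z.re < 0) :
    ∫ t in Set.Ioi (0:ℝ), Complex.exp (z * t) = -z⁻¹ := by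
  have hz0 : z ≠ 0 := fun h => by simp [h] at hz
  have hderiv : ∀ t ∈ Set.Ici (0:ℝ),
      HasDerivAt (fun t : ℝ => Complex.exp (z * t) / z) (Complex.exp (z * t)) t := by
    intro t _
    have h1 : HasDerivAt (fun t : ℝ => z * (t:ℂ)) z t := by
      simpa using (Complex.ofRealCLM.hasDerivAt (x := t)).const_mul z
    have := ((Complex.hasDerivAt_exp (z * t)).comp t h1).div_const z
    rw [mul_div_assoc] at this
    simpa [div_self hz0] using this
  have := integral_Ioi_of_hasDerivAt_of_tendsto' hderiv (cexp_integrableOn_Ioi hz)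
    (cexp_tendsto_zero hz)
  simpa using this

lemma koopman_output_eq {n : ℕ} (A : Matrix (Fin n) (Fin n) ℂ)
    (v w : Fin n → Fin n → ℂ) (lam : Fin n → ℂ)
    (hv : ∀ j, A *ᵥ v j = lam j • v j)
    (hbi : ∀ j k, w j ⬝ᵥ v k = if j = k then 1 else 0)
    (c x₀ : Fin n → ℂ) (t : ℝ) :
    c ⬝ᵥ (NormedSpace.exp ((t : ℂ) • A) *ᵥ x₀)
      = ∑ j, (w j ⬝ᵥ x₀) * (c ⬝ᵥ v j) * Complex.exp ((t:ℂ) * lam j) := by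
  classical
  set P : Matrix (Fin n) (Fin n) ℂ := Matrix.of fun i j => v j i with hP
  set W : Matrix (Fin n) (Fin n) ℂ := Matrix.of fun i j => w i j with hW
  have hWP : W * P = 1 := by
    ext j k
    simpa [Matrix.mul_apply, hW, hP, Matrix.one_apply, dotProduct] using hbi j k
  haveI : Invertible P := invertibleOfLeftInverse P W hWP
  have hPu : IsUnit P := isUnit_of_invertible P
  have hPinv : P⁻¹ = W := Matrix.inv_eq_left_inv hWP
  have hAP : A * P = P * Matrix.diagonal lam := by
    ext i k
    have := congrFun (hv k) i
    simp only [Matrix.mulVec, dotProduct, Pi.smul_apply, smul_eq_mul] at this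
    simp [Matrix.mul_apply, hP, Matrix.diagonal, this, mul_comm]
  have hA : A = P * Matrix.diagonal lam * P⁻¹ := by
    have := congrArg (· * P⁻¹) hAP
    simpa [Matrix.mul_assoc,
      Matrix.mul_nonsing_inv P (hPu.map (Matrix.detMonoidHom (R := ℂ) (n := Fin n)))] using this
  have hsmul : (t : ℂ) • A = P * Matrix.diagonal (fun j => (t:ℂ) * lam j) * P⁻¹ := by
    rw [hA]
    have hd : Matrix.diagonal (fun j => (t:ℂ) * lam j) = (t:ℂ) • Matrix.diagonal lam := by
      ext i j
      by_cases h : i = j <;> simp [Matrix.diagonal_apply, h]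
    rw [hd, mul_smul_comm, smul_mul_assoc]
  have hexp : NormedSpace.exp ((t : ℂ) • A)
      = P * Matrix.diagonal (fun j => Complex.exp ((t:ℂ) * lam j)) * P⁻¹ := by
    rw [hsmul, Matrix.exp_conj P _ hPu, Matrix.exp_diagonal]
    congr 2
    funext j
    rw [Pi.exp_def]
    simp [← Complex.exp_eq_exp_ℂ]
  rw [hexp, hPinv]
  rw [← Matrix.mulVec_mulVec, ← Matrix.mulVec_mulVec, Matrix.dotProduct_mulVec]
  unfold P W
  simp only [Matrix.vecMul, Matrix.mulVec, Matrix.mulVec_diagonal, dotProduct, Matrix.of_apply]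
  refine Finset.sum_congr rfl fun j _ => ?_
  simp only [Matrix.diagonal_apply, ite_mul, zero_mul, Finset.sum_ite_eq, Finset.mem_univ, if_true]
  ring

/-- The unilateral Laplace transform of the output of a diagonalizable linear
system has the partial-fraction form whose poles are the principal Koopman
eigenvalues `λⱼ` and whose residues are `φⱼ(x₀) Vⱼ = (wⱼᵀ x₀)(cᵀ vⱼ)`, valid
for `Re s > maxⱼ Re λⱼ`. -/
theorem linear_system_laplace_transform_partial_fractions
    {n : ℕ} (A : Matrix (Fin n) (Fin n) ℂ)
    (v w : Fin n → Fin n → ℂ) (lam : Fin n → ℂ)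
    (hv : ∀ j, A *ᵥ v j = lam j • v j)
    (hw : ∀ j, w j ᵥ* A = lam j • w j)
    (hbi : ∀ j k, w j ⬝ᵥ v k = if j = k then 1 else 0)
    (hindep : LinearIndependent ℂ v)
    (hspan : Submodule.span ℂ (Set.range v) = ⊤)
    (c x₀ : Fin n → ℂ) (s : ℂ) (hs : ∀ j, (lam j).re < s.re) :
    IntegrableOn
      (fun t : ℝ =>
        Complex.exp (-s * t) * (c ⬝ᵥ (NormedSpace.exp ((t : ℂ) • A) *ᵥ x₀)))
      (Set.Ioi 0) ∧
    ∫ t in Set.Ioi (0 : ℝ),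
        Complex.exp (-s * t) * (c ⬝ᵥ (NormedSpace.exp ((t : ℂ) • A) *ᵥ x₀))
      = ∑ j, (w j ⬝ᵥ x₀) * (c ⬝ᵥ v j) / (s - lam j) := by
  have hre : ∀ j, (lam j - s).re < 0 := fun j => by
    have := hs j; simp [Complex.sub_re]; linarith
  have hkey : ∀ t : ℝ,
      Complex.exp (-s * t) * (c ⬝ᵥ (NormedSpace.exp ((t : ℂ) • A) *ᵥ x₀))
        = ∑ j, (w j ⬝ᵥ x₀) * (c ⬝ᵥ v j) * Complex.exp ((lam j - s) * t) := by
    intro t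
    rw [koopman_output_eq A v w lam hv hbi c x₀ t, Finset.mul_sum]
    refine Finset.sum_congr rfl fun j _ => ?_
    rw [mul_comm (Complex.exp (-s * t)), mul_assoc, ← Complex.exp_add]
    ring_nf
  have hterm : ∀ j : Fin n, IntegrableOn
      (fun t : ℝ => (w j ⬝ᵥ x₀) * (c ⬝ᵥ v j) * Complex.exp ((lam j - s) * t))
      (Set.Ioi 0) := fun j => (cexp_integrableOn_Ioi (hre j)).const_mul _
  have hint : IntegrableOn
      (fun t : ℝ =>
        Complex.exp (-s * t) * (c ⬝ᵥ (NormedSpace.exp ((t : ℂ) • A) *ᵥ x₀)))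
      (Set.Ioi 0) := by
    rw [funext hkey]
    exact integrable_finset_sum _ fun j _ => hterm j
  refine ⟨hint, ?_⟩
  rw [funext hkey, integral_finset_sum _ fun j _ => hterm j]
  refine Finset.sum_congr rfl fun j _ => ?_
  rw [MeasureTheory.integral_const_mul, cexp_integral_Ioi (hre j)]
  rw [div_eq_mul_inv, ← inv_neg, neg_sub]
end
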